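/- Let G and 𝓖 be countable groups and γ₁, γ₂ : G → 𝓖 group homomorphisms. Assume that for every h ∈ 𝓖 with h ≠ e, the set {γ₁(g) h γ₁(g)⁻¹ | g ∈ G} is infinite. If there exists a finite subset F ⊂ 𝓖 such that F ∩ γ₁(g) F γ₂(g)⁻¹ ≠ ∅ for all g ∈ G, then there exists an h ∈ 𝓖 with γ₁(g) = h γ₂(g) h⁻¹ for all g ∈ G. -/

import Mathlib

open scoped Pointwise

/-- Auxiliary: if `A K A⁻¹ = B K B⁻¹` then `K` commutes with `B⁻¹ * A`. -/
theorem stmt_5_aux {G' : Type*} [Group G'] (A B K : G')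
    (h : A * K * A⁻¹ = B * K * B⁻¹) : K * (B⁻¹ * A) * K⁻¹ = B⁻¹ * A := by
  calc K * (B⁻¹ * A) * K⁻¹
      = B⁻¹ * (B * K * B⁻¹) * A * K⁻¹ := by group
    _ = B⁻¹ * (A * K * A⁻¹) * A * K⁻¹ := by rw [h]
    _ = B⁻¹ * A := by group

/-- let `G`, `G'` be countable groups and `γ₁ γ₂ : G → G'` homomorphisms such
that every nontrivial element of `G'` has infinite orbit under conjugation by the image of
`γ₁`. If some finite subset `F ⊆ G'` satisfies `F ∩ γ₁(g) F γ₂(g)⁻¹ ≠ ∅` for all `g ∈ G`,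
then `γ₁ = (Ad h) ∘ γ₂` for some `h ∈ G'`. -/
theorem stmt_5 {G G' : Type*} [Group G] [Group G'] [Countable G] [Countable G']
    (γ₁ γ₂ : G →* G')
    (horb : ∀ h : G', h ≠ 1 → {x : G' | ∃ g : G, x = γ₁ g * h * (γ₁ g)⁻¹}.Infinite)
    (F : Finset G')
    (hF : ∀ g : G, ∃ f₁ ∈ F, ∃ f₂ ∈ F, f₁ = γ₁ g * f₂ * (γ₂ g)⁻¹) :
    ∃ h : G', ∀ g : G, γ₁ g = h * γ₂ g * h⁻¹ := by
  classical
  -- the subgroup on which `c` conjugates `γ₂` to `γ₁`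
  let D : G' → Subgroup G := fun c =>
    { carrier := {k : G | γ₁ k = c * γ₂ k * c⁻¹}
      one_mem' := by simp
      mul_mem' := by
        intro x y hx hy
        simp only [Set.mem_setOf_eq, map_mul] at *
        rw [hx, hy]; group
      inv_mem' := by
        intro x hx
        simp only [Set.mem_setOf_eq, map_inv] at *
        rw [hx]; group }
  -- choose a witness for each pair that admits one
  let P : G' × G' → Prop := fun p => ∃ g : G, p.1 = γ₁ g * p.2 * (γ₂ g)⁻¹
  let w : G' × G' → G := fun p => if h : P p then h.choose else 1
  have hw : ∀ p, P p → p.1 = γ₁ (w p) * p.2 * (γ₂ (w p))⁻¹ := by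
    intro p hp
    simp only [w, dif_pos hp]
    exact hp.choose_spec
  set s : Finset (G' × G') := (F ×ˢ F).filter P with hs
  -- coset cover
  have hcover : ⋃ p ∈ s, (w p) • ((D p.2 : Subgroup G) : Set G) = Set.univ := by
    refine Set.eq_univ_of_forall fun x => ?_
    obtain ⟨f₁, hf₁, f₂, hf₂, hx⟩ := hF x
    have hp : P (f₁, f₂) := ⟨x, hx⟩
    have hps : (f₁, f₂) ∈ s := by
      simp only [hs, Finset.mem_filter, Finset.mem_product]
      exact ⟨⟨hf₁, hf₂⟩, hp⟩
    refine Set.mem_biUnion hps ?_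
    rw [Set.mem_smul_set_iff_inv_smul_mem]
    have hwp := hw _ hp
    have h2 : γ₁ x * f₂ * (γ₂ x)⁻¹ = γ₁ (w (f₁, f₂)) * f₂ * (γ₂ (w (f₁, f₂)))⁻¹ := by
      rw [← hx, ← hwp]
    show γ₁ ((w (f₁, f₂))⁻¹ * x) = f₂ * γ₂ ((w (f₁, f₂))⁻¹ * x) * f₂⁻¹
    simp only [map_mul, map_inv]
    calc (γ₁ (w (f₁, f₂)))⁻¹ * γ₁ x
        = (γ₁ (w (f₁, f₂)))⁻¹ * (γ₁ x * f₂ * (γ₂ x)⁻¹ * (γ₂ x * f₂⁻¹)) := by group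
      _ = (γ₁ (w (f₁, f₂)))⁻¹ *
            (γ₁ (w (f₁, f₂)) * f₂ * (γ₂ (w (f₁, f₂)))⁻¹ * (γ₂ x * f₂⁻¹)) := by rw [h2]
      _ = f₂ * ((γ₂ (w (f₁, f₂)))⁻¹ * γ₂ x) * f₂⁻¹ := by group
  obtain ⟨p, _, hfi⟩ := Subgroup.exists_finiteIndex_of_leftCoset_cover hcover
  refine ⟨p.2, fun g => ?_⟩
  set b : G' := p.2 with hb
  haveI : (D b).FiniteIndex := hfi
  -- the finite-index subgroup of elements `k` with both `k` and `g k g⁻¹` in `D b`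
  haveI hcfi : ((D b).comap (MulAut.conj g).toMonoidHom).FiniteIndex :=
    ⟨by
      rw [Subgroup.index_comap_of_surjective _ (MulAut.conj g).surjective]
      exact Subgroup.FiniteIndex.index_ne_zero⟩
  set E : Subgroup G := D b ⊓ (D b).comap (MulAut.conj g).toMonoidHom with hE
  haveI : E.FiniteIndex := by rw [hE]; infer_instance
  set u : G' := (b * γ₂ g * b⁻¹)⁻¹ * γ₁ g with hu
  -- `u` commutes with `γ₁ k` for `k ∈ E`
  have hcomm : ∀ k ∈ E, γ₁ k * u * (γ₁ k)⁻¹ = u := by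
    intro k hk
    obtain ⟨hk1, hk2⟩ := hk
    have h1 : γ₁ k = b * γ₂ k * b⁻¹ := hk1
    have h2 : γ₁ (g * k * g⁻¹) = b * γ₂ (g * k * g⁻¹) * b⁻¹ := hk2
    simp only [map_mul, map_inv] at h2
    have h3 : γ₁ g * γ₁ k * (γ₁ g)⁻¹ = (b * γ₂ g * b⁻¹) * γ₁ k * (b * γ₂ g * b⁻¹)⁻¹ := by
      rw [h2, h1]; group
    rw [hu]
    exact stmt_5_aux (γ₁ g) (b * γ₂ g * b⁻¹) (γ₁ k) h3
  -- if `u ≠ 1` its conjugation orbit would be finite, contradicting `horb`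
  have hu1 : u = 1 := by
    by_contra hne
    have hinf := horb u hne
    have hfin : {x : G' | ∃ g' : G, x = γ₁ g' * u * (γ₁ g')⁻¹}.Finite := by
      have hsub : {x : G' | ∃ g' : G, x = γ₁ g' * u * (γ₁ g')⁻¹}
          ⊆ Set.range (fun q : G ⧸ E => γ₁ q.out * u * (γ₁ q.out)⁻¹) := by
        rintro x ⟨g', rfl⟩
        refine ⟨QuotientGroup.mk g', ?_⟩
        set r : G := (QuotientGroup.mk g' : G ⧸ E).out with hr
        have hkE : r⁻¹ * g' ∈ E := by
          have hq : (r : G ⧸ E) = (g' : G ⧸ E) := by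
            rw [hr]; exact QuotientGroup.out_eq' _
          exact QuotientGroup.eq.mp hq
        have hc := hcomm _ hkE
        simp only [map_mul, map_inv] at hc
        calc γ₁ r * u * (γ₁ r)⁻¹
            = γ₁ r * ((γ₁ r)⁻¹ * γ₁ g' * u * ((γ₁ r)⁻¹ * γ₁ g')⁻¹) * (γ₁ r)⁻¹ := by
              rw [hc]
          _ = γ₁ g' * u * (γ₁ g')⁻¹ := by group
      exact Set.Finite.subset (Set.finite_range _) hsub
    exact hinf hfin
  have h0 : (b * γ₂ g * b⁻¹)⁻¹ * γ₁ g = 1 := hu ▸ hu1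
  calc γ₁ g = (b * γ₂ g * b⁻¹) * ((b * γ₂ g * b⁻¹)⁻¹ * γ₁ g) := by group
    _ = b * γ₂ g * b⁻¹ := by rw [h0]; group
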